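/- Let f = (f₁,…,f_d) be a tuple of homogeneous polynomials of degree ℓ ≥ 1 in d variables satisfying Σᵢ zᵢfᵢ = 0. Then for every w ∈ ℂ^d and every index i, ⟨f, ⟨z,w⟩^{ℓ-1} w̄ zᵀ eᵢ⟩_{F_ℓ} = -(ℓ-1)! · fᵢ(w), where the inner product is the Fischer-Fock inner product on ℂ^d ⊗ P_ℓ, ⟨z,w⟩ = Σⱼ zⱼw̄ⱼ, and w̄ zᵀ eᵢ denotes the vector-valued polynomial z ↦ zᵢ·w̄. -/

import Mathlib

open MvPolynomial
open scoped ComplexConjugate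

/-- The Fischer-Fock inner product on polynomials in `d` complex variables, determined by
`⟨z^α, z^β⟩_F = α! δ_{α,β}`. -/
noncomputable def fock (d : ℕ) (p q : MvPolynomial (Fin d) ℂ) : ℂ :=
  ∑ α ∈ p.support ∪ q.support,
    ((∏ i, (α i).factorial : ℕ) : ℂ) * p.coeff α * conj (q.coeff α)

lemma fock_eq_sum (d : ℕ) (p q : MvPolynomial (Fin d) ℂ) (s : Finset ((Fin d) →₀ ℕ))
    (hs : p.support ∪ q.support ⊆ s) :
    fock d p q = ∑ α ∈ s,
      ((∏ i, (α i).factorial : ℕ) : ℂ) * p.coeff α * conj (q.coeff α) := by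
  unfold fock
  refine Finset.sum_subset hs fun α _ hα => ?_
  have hp : p.coeff α = 0 := by
    by_contra h
    exact hα (Finset.mem_union_left _ (mem_support_iff.mpr h))
  simp [hp]

lemma fock_zero_right (d : ℕ) (p : MvPolynomial (Fin d) ℂ) : fock d p 0 = 0 := by
  unfold fock; simp

lemma fock_add_right (d : ℕ) (p q r : MvPolynomial (Fin d) ℂ) :
    fock d p (q + r) = fock d p q + fock d p r := by
  classical
  have hadd : (q + r).support ⊆ q.support ∪ r.support := MvPolynomial.support_add
  set s := p.support ∪ (q.support ∪ r.support) with hsdef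
  have h1 : p.support ∪ (q + r).support ⊆ s :=
    Finset.union_subset Finset.subset_union_left (hadd.trans Finset.subset_union_right)
  have h2 : p.support ∪ q.support ⊆ s :=
    Finset.union_subset Finset.subset_union_left
      (Finset.subset_union_left.trans Finset.subset_union_right)
  have h3 : p.support ∪ r.support ⊆ s :=
    Finset.union_subset Finset.subset_union_left
      (Finset.subset_union_right.trans Finset.subset_union_right)
  rw [fock_eq_sum d p (q + r) s h1, fock_eq_sum d p q s h2, fock_eq_sum d p r s h3,
    ← Finset.sum_add_distrib]
  refine Finset.sum_congr rfl fun α _ => ?_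
  simp only [coeff_add, map_add]
  ring

lemma fock_sum_right (d : ℕ) {ι : Type*} (p : MvPolynomial (Fin d) ℂ) (t : Finset ι)
    (q : ι → MvPolynomial (Fin d) ℂ) :
    fock d p (∑ k ∈ t, q k) = ∑ k ∈ t, fock d p (q k) := by
  classical
  induction t using Finset.induction_on with
  | empty => simp [fock_zero_right]
  | insert _ _ h ih => rw [Finset.sum_insert h, Finset.sum_insert h, fock_add_right, ih]

lemma fock_C_mul_right (d : ℕ) (c : ℂ) (p q : MvPolynomial (Fin d) ℂ) :
    fock d p (C c * q) = conj c * fock d p q := by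
  have hsub : (C c * q).support ⊆ q.support := by
    intro α hα
    rw [mem_support_iff, coeff_C_mul] at hα
    rw [mem_support_iff]
    intro h; exact hα (by rw [h, mul_zero])
  rw [fock_eq_sum d p (C c * q) (p.support ∪ q.support)
      (Finset.union_subset (Finset.subset_union_left)
        (hsub.trans Finset.subset_union_right)),
      fock_eq_sum d p q (p.support ∪ q.support) subset_rfl, Finset.mul_sum]
  refine Finset.sum_congr rfl fun α _ => ?_
  rw [coeff_C_mul, map_mul]
  ring

lemma degree_eq_sum_univ {d : ℕ} (α : Fin d →₀ ℕ) : α.degree = ∑ k, α k :=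
  Finset.sum_subset (Finset.subset_univ _) (fun _ _ hx => Finsupp.notMem_support_iff.mp hx)

lemma sum_single_apply {d : ℕ} (i : Fin d) :
    (∑ k, (Finsupp.single i 1 : Fin d →₀ ℕ) k) = 1 := by
  simp [Finsupp.single_apply]

lemma coeff_pderiv {d : ℕ} (i : Fin d) (p : MvPolynomial (Fin d) ℂ) (β : (Fin d) →₀ ℕ) :
    (pderiv i p).coeff β = ((β i + 1 : ℕ) : ℂ) * p.coeff (β + Finsupp.single i 1) := by
  induction p using MvPolynomial.induction_on' with
  | monomial s a =>
    rw [pderiv_monomial]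
    simp only [coeff_monomial]
    by_cases h : s = β + Finsupp.single i 1
    · subst h
      rw [if_pos rfl, if_pos (by rw [add_tsub_cancel_right]),
        Finsupp.add_apply, Finsupp.single_eq_same]
      push_cast; ring
    · rw [if_neg h]
      by_cases h2 : s - Finsupp.single i 1 = β
      · rw [if_pos h2]
        have hsi : s i = 0 := by
          by_contra hne
          apply h
          rw [← h2, tsub_add_cancel_of_le]
          rwa [Finsupp.single_le_iff, Nat.one_le_iff_ne_zero]
        simp [hsi]
      · rw [if_neg h2, mul_zero]
  | add p q hp hq =>
    simp only [map_add, coeff_add, hp, hq]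
    ring

lemma factorial_prod_add_single {d : ℕ} (i : Fin d) (β : Fin d →₀ ℕ) :
    (∏ k, ((Finsupp.single i 1 + β : Fin d →₀ ℕ) k).factorial)
      = (β i + 1) * ∏ k, (β k).factorial := by
  rw [← Finset.mul_prod_erase Finset.univ _ (Finset.mem_univ i),
      ← Finset.mul_prod_erase Finset.univ (fun k => (β k).factorial) (Finset.mem_univ i)]
  have h1 : (Finsupp.single i 1 + β : Fin d →₀ ℕ) i = β i + 1 := by
    simp [add_comm]
  have h2 : ∀ k ∈ Finset.univ.erase i,
      ((Finsupp.single i 1 + β : Fin d →₀ ℕ) k).factorial = (β k).factorial := by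
    intro k hk
    have : k ≠ i := (Finset.mem_erase.mp hk).1
    simp [Finsupp.single_apply, Ne.symm this]
  rw [h1, Nat.factorial_succ, Finset.prod_congr rfl h2]
  ring

lemma fock_X_mul {d : ℕ} (i : Fin d) (p q : MvPolynomial (Fin d) ℂ) :
    fock d p (X i * q) = fock d (pderiv i p) q := by
  classical
  set T := (pderiv i p).support ∪ q.support with hT
  set φ : ((Fin d) →₀ ℕ) ↪ ((Fin d) →₀ ℕ) := addLeftEmbedding (Finsupp.single i 1) with hφ
  set S := p.support ∪ (X i * q).support ∪ T.map φ with hS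
  rw [fock_eq_sum d p (X i * q) S
      (by intro x hx; exact Finset.mem_union_left _ hx)]
  have hvanish : ∀ α ∈ S, α ∉ T.map φ →
      ((∏ k, (α k).factorial : ℕ) : ℂ) * p.coeff α * conj ((X i * q).coeff α) = 0 := by
    intro α _ hα
    have : (X i * q).coeff α = 0 := by
      rw [coeff_X_mul']
      split_ifs with hmem
      · by_contra h
        apply hα
        rw [Finset.mem_map]
        refine ⟨α - Finsupp.single i 1, Finset.mem_union_right _ (mem_support_iff.mpr h), ?_⟩
        show Finsupp.single i 1 + (α - Finsupp.single i 1) = α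
        rw [add_comm, tsub_add_cancel_of_le]
        rw [Finsupp.single_le_iff, Nat.one_le_iff_ne_zero]
        exact Finsupp.mem_support_iff.mp hmem
      · rfl
    rw [this, map_zero, mul_zero]
  rw [← Finset.sum_subset (Finset.subset_union_right) hvanish,
      Finset.sum_map,
      fock_eq_sum d (pderiv i p) q T subset_rfl]
  refine Finset.sum_congr rfl fun β _ => ?_
  have hφβ : φ β = Finsupp.single i 1 + β := rfl
  rw [hφβ, coeff_X_mul, coeff_pderiv, factorial_prod_add_single, add_comm β (Finsupp.single i 1)]
  push_cast
  ring

lemma pderiv_isHomogeneous {d n : ℕ} (i : Fin d) (p : MvPolynomial (Fin d) ℂ)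
    (hp : p.IsHomogeneous (n + 1)) : (pderiv i p).IsHomogeneous n := by
  intro β hβ
  rw [coeff_pderiv] at hβ
  have h1 : p.coeff (β + Finsupp.single i 1) ≠ 0 := by
    intro h; rw [h, mul_zero] at hβ; exact hβ rfl
  have h2 := hp h1
  rw [Pi.one_def, ← Finsupp.degree_eq_weight_one] at h2 ⊢
  have h3 : (β + Finsupp.single i 1).degree = β.degree + 1 := by
    rw [degree_eq_sum_univ, degree_eq_sum_univ]
    have hap : ∀ k, (β + Finsupp.single i 1 : Fin d →₀ ℕ) k
        = β k + (Finsupp.single i 1 : Fin d →₀ ℕ) k := fun k => rfl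
    rw [Finset.sum_congr rfl fun k _ => hap k, Finset.sum_add_distrib, sum_single_apply]
  omega

lemma euler {d n : ℕ} (p : MvPolynomial (Fin d) ℂ) (hp : p.IsHomogeneous n) :
    (∑ k, X k * pderiv k p) = C (n : ℂ) * p := by
  ext α
  rw [coeff_sum, coeff_C_mul]
  have hterm : ∀ k, (X k * pderiv k p).coeff α = ((α k : ℕ) : ℂ) * p.coeff α := by
    intro k
    rw [coeff_X_mul']
    split_ifs with hmem
    · rw [coeff_pderiv]
      have h1 : α - Finsupp.single k 1 + Finsupp.single k 1 = α := by
        rw [tsub_add_cancel_of_le]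
        rw [Finsupp.single_le_iff, Nat.one_le_iff_ne_zero]
        exact Finsupp.mem_support_iff.mp hmem
      rw [h1]
      congr 2
      have : α k ≠ 0 := Finsupp.mem_support_iff.mp hmem
      have h2 : (α - Finsupp.single k 1 : Fin d →₀ ℕ) k = α k - 1 := by
        rw [Finsupp.tsub_apply, Finsupp.single_eq_same]
      omega
    · have : α k = 0 := by
        by_contra h
        exact hmem (Finsupp.mem_support_iff.mpr h)
      rw [this]
      simp
  rw [Finset.sum_congr rfl fun k _ => hterm k, ← Finset.sum_mul]
  by_cases hα : p.coeff α = 0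
  · rw [hα, mul_zero, mul_zero]
  · congr 1
    have hdeg := hp hα
    rw [Pi.one_def, ← Finsupp.degree_eq_weight_one] at hdeg
    rw [← hdeg, degree_eq_sum_univ]
    push_cast
    rfl

lemma isHomogeneous_zero_support {d : ℕ} (p : MvPolynomial (Fin d) ℂ)
    (hp : p.IsHomogeneous 0) : p.support ⊆ {0} := by
  intro α hα
  have := hp (Finsupp.mem_support_iff.mp hα)
  rw [Pi.one_def, ← Finsupp.degree_eq_weight_one, Finsupp.degree_eq_zero_iff] at this
  simp [this]

lemma fock_L_pow {d : ℕ} (w : Fin d → ℂ) :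
    ∀ n (p : MvPolynomial (Fin d) ℂ), p.IsHomogeneous n →
    fock d p ((∑ k, C (conj (w k)) * X k) ^ n) = (n.factorial : ℂ) * eval w p := by
  intro n
  induction n with
  | zero =>
    intro p hp
    have hsupp := isHomogeneous_zero_support p hp
    rw [pow_zero]
    have h1 : (1 : MvPolynomial (Fin d) ℂ).support = {0} := by
      rw [show (1 : MvPolynomial (Fin d) ℂ) = monomial 0 1 from rfl, support_monomial]
      simp
    rw [fock_eq_sum d p 1 {0} (by rw [h1]; exact Finset.union_subset hsupp subset_rfl)]
    have heval : eval w p = p.coeff 0 := by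
      rw [eval_eq]
      rcases Finset.subset_singleton_iff.mp hsupp with h | h
      · rw [h, Finset.sum_empty]
        have : p = 0 := support_eq_empty.mp h
        rw [this, coeff_zero]
      · rw [h, Finset.sum_singleton]
        simp
    rw [heval]
    simp
  | succ n ih =>
    intro p hp
    rw [pow_succ']
    have hL : (∑ k, C (conj (w k)) * X k) * (∑ k, C (conj (w k)) * X k) ^ n
        = ∑ k, C (conj (w k)) * (X k * (∑ j, C (conj (w j)) * X j) ^ n) := by
      rw [Finset.sum_mul]
      refine Finset.sum_congr rfl fun k _ => by ring
    rw [hL, fock_sum_right]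
    have hterm : ∀ k, fock d p (C (conj (w k)) * (X k * (∑ j, C (conj (w j)) * X j) ^ n))
        = w k * ((n.factorial : ℂ) * eval w (pderiv k p)) := by
      intro k
      rw [fock_C_mul_right, fock_X_mul, ih (pderiv k p) (pderiv_isHomogeneous k p hp),
        Complex.conj_conj]
    rw [Finset.sum_congr rfl fun k _ => hterm k]
    have heuler := congrArg (eval w) (euler p hp)
    rw [map_sum, eval_mul, eval_C] at heuler
    have h2 : ∑ k, eval w (X k * pderiv k p) = ∑ k, w k * eval w (pderiv k p) := by
      refine Finset.sum_congr rfl fun k _ => by rw [eval_mul, eval_X]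
    rw [h2] at heuler
    have : ∑ k, w k * ((n.factorial : ℂ) * eval w (pderiv k p))
        = (n.factorial : ℂ) * ∑ k, w k * eval w (pderiv k p) := by
      rw [Finset.mul_sum]
      refine Finset.sum_congr rfl fun k _ => by ring
    rw [this, heuler, Nat.factorial_succ]
    push_cast
    ring

/-- If `f = (f₁,…,f_d)` are homogeneous of degree `ℓ = m + 1 ≥ 1` with
`Σᵢ zᵢ fᵢ = 0`, then for every `w ∈ ℂ^d` and index `i`,
`⟨f, ⟨z,w⟩^{ℓ-1} w̄ zᵀ eᵢ⟩_{F_ℓ} = -(ℓ-1)! fᵢ(w)`. -/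
theorem stmt8 (d m : ℕ) (f : Fin d → MvPolynomial (Fin d) ℂ)
    (hf : ∀ j, (f j).IsHomogeneous (m + 1))
    (hrel : (∑ j, X j * f j) = 0) (w : Fin d → ℂ) (i : Fin d) :
    (∑ j, fock d (f j)
        ((C (conj (w j)) * X i) * (∑ k, C (conj (w k)) * X k) ^ m))
      = -((m.factorial : ℂ)) * eval w (f i) := by
  classical
  have hterm : ∀ j, fock d (f j) ((C (conj (w j)) * X i) * (∑ k, C (conj (w k)) * X k) ^ m)
      = w j * ((m.factorial : ℂ) * eval w (pderiv i (f j))) := by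
    intro j
    rw [mul_assoc, fock_C_mul_right, fock_X_mul,
      fock_L_pow w m (pderiv i (f j)) (pderiv_isHomogeneous i (f j) (hf j)),
      Complex.conj_conj]
  rw [Finset.sum_congr rfl fun j _ => hterm j]
  -- differentiate the relation
  have hd : (0 : MvPolynomial (Fin d) ℂ) = f i + ∑ j, X j * pderiv i (f j) := by
    have h1 := congrArg (pderiv i) hrel
    rw [map_sum, map_zero] at h1
    have h2 : ∀ j, pderiv i (X j * f j)
        = (if j = i then (1 : MvPolynomial (Fin d) ℂ) else 0) * f j + X j * pderiv i (f j) := by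
      intro j
      rw [pderiv_mul]
      congr 1
      by_cases h : j = i
      · subst h; rw [pderiv_X_self, if_pos rfl]
      · rw [pderiv_X_of_ne h, if_neg h]
    rw [Finset.sum_congr rfl fun j _ => h2 j, Finset.sum_add_distrib] at h1
    have h3 : (∑ j, (if j = i then (1 : MvPolynomial (Fin d) ℂ) else 0) * f j) = f i := by
      rw [Finset.sum_eq_single i (fun j _ hj => by rw [if_neg hj, zero_mul])
        (fun h => absurd (Finset.mem_univ i) h)]
      rw [if_pos rfl, one_mul]
    rw [h3] at h1
    exact h1.symm
  have hd2 := congrArg (eval w) hd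
  rw [map_zero, map_add, map_sum] at hd2
  have h4 : ∑ j, eval w (X j * pderiv i (f j)) = ∑ j, w j * eval w (pderiv i (f j)) := by
    refine Finset.sum_congr rfl fun j _ => by rw [eval_mul, eval_X]
  rw [h4] at hd2
  have h5 : ∑ j, w j * eval w (pderiv i (f j)) = -eval w (f i) := by
    linear_combination -hd2
  calc ∑ j, w j * ((m.factorial : ℂ) * eval w (pderiv i (f j)))
      = (m.factorial : ℂ) * ∑ j, w j * eval w (pderiv i (f j)) := by
        rw [Finset.mul_sum]; exact Finset.sum_congr rfl fun j _ => by ring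
    _ = -((m.factorial : ℂ)) * eval w (f i) := by rw [h5]; ring
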